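/- Let p,q ≥ 0 with p+q < 1 and ε > 0. Let h denote the binary entropy in nats and set φ = (h(p)−h(q))/(1−p−q). Define m_COUNT = (1/D_KL(q‖1/(1+e^φ)))·k·log(n/k). If m ≤ (1−ε)·m_COUNT, then for every non-adaptive test design with m tests (any, possibly random, binary m×n test matrix) and every estimator of σ from the displayed test outcomes under the p–q noise channel, the probability of exactly recovering σ does not tend to 1 as n → ∞. -/

import Mathlib

open MeasureTheory Real Filter Set
open scoped ENNReal

noncomputable section

/-- KL divergence between Bernoulli(r) and Bernoulli(s) (natural log, boundary by continuity). -/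
def klBer (r s : ℝ) : ℝ := r * Real.log (r / s) + (1 - r) * Real.log ((1 - r) / (1 - s))

/-- Binary entropy in nats. -/
def binEnt (x : ℝ) : ℝ := -x * Real.log x - (1 - x) * Real.log (1 - x)

instance finsetFinMeasurableSpace (n : ℕ) : MeasurableSpace (Finset (Fin n)) := ⊤

/-- Uniform probability measure on a finset. -/
def uniformFinset {α : Type*} [MeasurableSpace α] (s : Finset α) : Measure α :=
  (s.card : ℝ≥0∞)⁻¹ • ∑ x ∈ s, Measure.dirac x

/-- Bernoulli measure on `Bool` giving probability `p` to `true`. -/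
def bern (p : ℝ) : Measure Bool :=
  ENNReal.ofReal p • Measure.dirac true + ENNReal.ofReal (1 - p) • Measure.dirac false

/-- Infection-status vectors of Hamming weight `k`. -/
def sigmaSet (n k : ℕ) : Finset (Fin n → Bool) :=
  Finset.univ.filter fun σ => (Finset.univ.filter fun i => σ i = true).card = k

/-- Sample space for a general (possibly random) non-adaptive design: (infection status,
test matrix given as the pool of each of the `m` tests, negative-test flips `U ~ Bern(p)`,
positive-test flips `V ~ Bern(q)`). -/
abbrev GenSpace (n m : ℕ) :=
  (Fin n → Bool) × (Fin m → Finset (Fin n)) × (Fin m → Bool) × (Fin m → Bool)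

/-- Joint law for an arbitrary (random) non-adaptive design `ν` under p–q noise. -/
def genMeasure (n m k : ℕ) (ν : Measure (Fin m → Finset (Fin n))) (p q : ℝ) :
    Measure (GenSpace n m) :=
  (uniformFinset (sigmaSet n k)).prod (ν.prod
    ((Measure.pi fun _ : Fin m => bern p).prod (Measure.pi fun _ : Fin m => bern q)))

/-- Displayed outcome of test `a` for a general design. -/
def displayedGen {n m : ℕ} (σ : Fin n → Bool) (A : Fin m → Finset (Fin n))
    (U V : Fin m → Bool) (a : Fin m) : Bool :=
  if ∃ i ∈ A a, σ i = true then !(V a) else U a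

lemma mul_log_div_aux {x y : ℝ} (hx : 0 ≤ x) (hy : 0 < y) :
    x * Real.log (x / y) = x * Real.log x - x * Real.log y := by
  rcases eq_or_lt_of_le hx with h | h
  · simp [← h]
  · rw [Real.log_div (ne_of_gt h) (ne_of_gt hy)]; ring

lemma klBer_expand {r s : ℝ} (hr0 : 0 ≤ r) (hr1 : r ≤ 1) (hs0 : 0 < s) (hs1 : s < 1) :
    klBer r s = (r * Real.log r + (1 - r) * Real.log (1 - r))
      - r * Real.log s - (1 - r) * Real.log (1 - s) := by
  unfold klBer
  rw [mul_log_div_aux hr0 hs0, mul_log_div_aux (by linarith) (by linarith)]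
  ring

lemma klBer_pos {r s : ℝ} (hr0 : 0 ≤ r) (hr1 : r < 1) (hs0 : 0 < s) (hs1 : s < 1)
    (hne : r ≠ s) : 0 < klBer r s := by
  rcases eq_or_lt_of_le hr0 with h | h
  · -- r = 0
    have : klBer r s = -Real.log (1 - s) := by
      rw [← h]; unfold klBer; simp [Real.log_div (by norm_num : (1:ℝ) ≠ 0) (by linarith : 1 - s ≠ 0)]
    rw [this]
    have : Real.log (1 - s) < 0 := Real.log_neg (by linarith) (by linarith)
    linarith
  · -- 0 < r
    have h1r : (0:ℝ) < 1 - r := by linarith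
    have hsr : 0 < s / r := by positivity
    have hsr1 : s / r ≠ 1 := by
      intro hc
      exact hne (by field_simp at hc; linarith)
    have ha : Real.log (s / r) < s / r - 1 := Real.log_lt_sub_one_of_pos hsr hsr1
    have hb : Real.log ((1 - s) / (1 - r)) ≤ (1 - s) / (1 - r) - 1 :=
      Real.log_le_sub_one_of_pos (div_pos (by linarith) h1r)
    have ha' : r * Real.log (s / r) < r * (s / r - 1) := by
      exact mul_lt_mul_of_pos_left ha h
    have hb' : (1 - r) * Real.log ((1 - s) / (1 - r)) ≤ (1 - r) * ((1 - s) / (1 - r) - 1) :=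
      mul_le_mul_of_nonneg_left hb (le_of_lt h1r)
    have e1 : r * (s / r - 1) = s - r := by field_simp
    have e2 : (1 - r) * ((1 - s) / (1 - r) - 1) = r - s := by field_simp; ring
    have hlog1 : Real.log (s / r) = Real.log s - Real.log r :=
      Real.log_div (ne_of_gt hs0) (ne_of_gt h)
    have hlog2 : Real.log ((1 - s) / (1 - r)) = Real.log (1 - s) - Real.log (1 - r) :=
      Real.log_div (by linarith) (by linarith)
    have hkl : klBer r s = -(r * Real.log (s / r) + (1 - r) * Real.log ((1 - s) / (1 - r))) := by
      rw [klBer_expand hr0 (le_of_lt hr1) hs0 hs1, hlog1, hlog2]; ring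
    rw [hkl]
    nlinarith

lemma klBer_self {s : ℝ} (hs0 : 0 < s) (hs1 : s < 1) : klBer s s = 0 := by
  unfold klBer
  rw [div_self (ne_of_gt hs0), div_self (by linarith : (1:ℝ) - s ≠ 0), Real.log_one]
  ring

section Consts

variable {p q : ℝ} (hp : 0 ≤ p) (hq : 0 ≤ q) (hpq : p + q < 1)

/-- φ -/
def phiC (p q : ℝ) : ℝ := (binEnt p - binEnt q) / (1 - p - q)

/-- s* = 1/(1+e^φ) -/
def sC (p q : ℝ) : ℝ := 1 / (1 + Real.exp (phiC p q))

/-- t* = 1 - s* -/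
def tC (p q : ℝ) : ℝ := 1 - sC p q

/-- capacity -/
def capC (p q : ℝ) : ℝ := klBer q (sC p q)

lemma sC_pos : 0 < sC p q := by
  have := Real.exp_pos (phiC p q); unfold sC; positivity

lemma sC_lt_one : sC p q < 1 := by
  have h := Real.exp_pos (phiC p q)
  unfold sC
  rw [div_lt_one (by linarith)]
  linarith

lemma tC_pos : 0 < tC p q := by
  have := sC_lt_one (p := p) (q := q); unfold tC; linarith

lemma tC_lt_one : tC p q < 1 := by
  have := sC_pos (p := p) (q := q); unfold tC; linarith

lemma log_tC_sub : Real.log (tC p q) - Real.log (1 - tC p q) = phiC p q := by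
  have hE := Real.exp_pos (phiC p q)
  have hs : sC p q = 1 / (1 + Real.exp (phiC p q)) := rfl
  have h1t : 1 - tC p q = sC p q := by unfold tC; ring
  have ht : tC p q = Real.exp (phiC p q) * sC p q := by
    unfold tC; rw [hs]; field_simp; ring
  rw [h1t, ht, Real.log_mul (ne_of_gt hE) (ne_of_gt (sC_pos (p := p) (q := q))),
    Real.log_exp]
  ring

include hp hq hpq in
lemma key_identity : klBer p (tC p q) = capC p q := by
  have hp1 : p < 1 := by linarith
  have hq1 : q < 1 := by linarith
  have hs0 := sC_pos (p := p) (q := q)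
  have hs1 := sC_lt_one (p := p) (q := q)
  have ht0 := tC_pos (p := p) (q := q)
  have ht1 := tC_lt_one (p := p) (q := q)
  have h1t : 1 - tC p q = sC p q := by unfold tC; ring
  have hlog := log_tC_sub (p := p) (q := q)
  have hpq' : (1:ℝ) - p - q ≠ 0 := by linarith
  have hphi : (1 - p - q) * phiC p q = binEnt p - binEnt q := by
    unfold phiC; field_simp
  rw [klBer_expand hp hp1.le ht0 ht1]
  rw [capC, klBer_expand hq hq1.le hs0 hs1]
  rw [← h1t]
  have h2 : 1 - (1 - tC p q) = tC p q := by ring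
  rw [h2]
  have hbp : p * Real.log p + (1 - p) * Real.log (1 - p) = -binEnt p := by
    unfold binEnt; ring
  have hbq : q * Real.log q + (1 - q) * Real.log (1 - q) = -binEnt q := by
    unfold binEnt; ring
  rw [hbp, hbq]
  unfold phiC at hphi hlog
  nlinarith [hlog, hphi]

include hp hq hpq in
lemma capC_pos : 0 < capC p q := by
  have hp1 : p < 1 := by linarith
  have hq1 : q < 1 := by linarith
  have hs0 := sC_pos (p := p) (q := q)
  have hs1 := sC_lt_one (p := p) (q := q)
  have ht0 := tC_pos (p := p) (q := q)
  have ht1 := tC_lt_one (p := p) (q := q)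
  have hkey := key_identity hp hq hpq
  have hTS : tC p q + sC p q = 1 := by unfold tC; ring
  set S := sC p q with hS
  set T := tC p q with hT
  by_cases hqs : q = S
  · -- then klBer p t = capC = 0, so p = t, so p + q = 1, contradiction
    have hcap0 : capC p q = 0 := by
      rw [capC, ← hS, hqs]; exact klBer_self hs0 hs1
    have hkp : klBer p T = 0 := by rw [hkey, hcap0]
    by_cases hpt : p = T
    · exfalso; linarith
    · exact absurd hkp (ne_of_gt (klBer_pos hp hp1 ht0 ht1 hpt))
  · exact klBer_pos hq hq1 hs0 hs1 hqs

end Consts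

section SumLemmas

variable {m : ℕ} {R : Type*} [CommSemiring R]

lemma sum_pi_bool_prod (g : Fin m → Bool → R) :
    ∑ y : Fin m → Bool, ∏ a, g a (y a) = ∏ a, (g a true + g a false) := by
  have h := Finset.prod_univ_sum (fun _ : Fin m => (Finset.univ : Finset Bool)) g
  rw [Fintype.piFinset_univ] at h
  rw [← h]
  exact Finset.prod_congr rfl fun a _ => by rw [Fintype.sum_bool]

lemma sum_pi_bool_single (ρ : Fin m → Bool → R) (hρ : ∀ a, ρ a true + ρ a false = 1)
    (a₀ : Fin m) (f : Bool → R) :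
    ∑ y : Fin m → Bool, (∏ a, ρ a (y a)) * f (y a₀) =
      ρ a₀ true * f true + ρ a₀ false * f false := by
  have step1 : ∀ y : Fin m → Bool,
      (∏ a, ρ a (y a)) * f (y a₀) = ∏ a, (ρ a (y a) * if a = a₀ then f (y a) else 1) := by
    intro y
    rw [Finset.prod_mul_distrib]
    congr 1
    rw [Finset.prod_ite_eq' Finset.univ a₀ (fun a => f (y a))]
    simp
  rw [Finset.sum_congr rfl fun y _ => step1 y,
    sum_pi_bool_prod (fun a b => ρ a b * if a = a₀ then f b else 1)]
  have step2 : ∀ a : Fin m,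
      (ρ a true * if a = a₀ then f true else 1) + (ρ a false * if a = a₀ then f false else 1)
      = if a = a₀ then ρ a₀ true * f true + ρ a₀ false * f false else 1 := by
    intro a
    by_cases h : a = a₀ <;> simp [h, hρ a]
  rw [Finset.prod_congr rfl fun a _ => step2 a,
    Finset.prod_ite_eq' Finset.univ a₀ (fun _ => ρ a₀ true * f true + ρ a₀ false * f false)]
  simp

lemma sum_pi_bool_pair (ρ : Fin m → Bool → R) (hρ : ∀ a, ρ a true + ρ a false = 1)
    {a₀ a₁ : Fin m} (hne : a₀ ≠ a₁) (f g : Bool → R) :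
    ∑ y : Fin m → Bool, (∏ a, ρ a (y a)) * (f (y a₀) * g (y a₁)) =
      (ρ a₀ true * f true + ρ a₀ false * f false) *
      (ρ a₁ true * g true + ρ a₁ false * g false) := by
  have step1 : ∀ y : Fin m → Bool,
      (∏ a, ρ a (y a)) * (f (y a₀) * g (y a₁)) =
        ∏ a, (ρ a (y a) * ((if a = a₀ then f (y a) else 1) * (if a = a₁ then g (y a) else 1))) := by
    intro y
    rw [Finset.prod_mul_distrib, Finset.prod_mul_distrib]
    rw [Finset.prod_ite_eq' Finset.univ a₀ (fun a => f (y a)),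
      Finset.prod_ite_eq' Finset.univ a₁ (fun a => g (y a))]
    simp
  rw [Finset.sum_congr rfl fun y _ => step1 y,
    sum_pi_bool_prod (fun a b => ρ a b * ((if a = a₀ then f b else 1) * (if a = a₁ then g b else 1)))]
  have step2 : ∀ a : Fin m,
      (ρ a true * ((if a = a₀ then f true else 1) * (if a = a₁ then g true else 1))) +
      (ρ a false * ((if a = a₀ then f false else 1) * (if a = a₁ then g false else 1)))
      = (if a = a₀ then ρ a₀ true * f true + ρ a₀ false * f false else 1) *
        (if a = a₁ then ρ a₁ true * g true + ρ a₁ false * g false else 1) := by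
    intro a
    by_cases h0 : a = a₀
    · simp [h0, hne, h0 ▸ hne]
    · by_cases h1 : a = a₁ <;> simp [h0, h1, hρ a, Ne.symm hne]
  rw [Finset.prod_congr rfl fun a _ => step2 a, Finset.prod_mul_distrib,
    Finset.prod_ite_eq' Finset.univ a₀ (fun _ => ρ a₀ true * f true + ρ a₀ false * f false),
    Finset.prod_ite_eq' Finset.univ a₁ (fun _ => ρ a₁ true * g true + ρ a₁ false * g false)]
  simp

lemma var_bound (ρ : Fin m → Bool → ℝ) (X : Fin m → Bool → ℝ) (Cap B : ℝ)
    (hρ0 : ∀ a b, 0 ≤ ρ a b) (hρ1 : ∀ a, ρ a true + ρ a false = 1)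
    (hmean : ∀ a, ρ a true * X a true + ρ a false * X a false = Cap)
    (hB : ∀ a b, |X a b - Cap| ≤ B) :
    ∑ y : Fin m → Bool, (∏ a, ρ a (y a)) * ((∑ a, X a (y a)) - m * Cap)^2 ≤ m * B^2 := by
  set h : Fin m → Bool → ℝ := fun a b => X a b - Cap with hh
  have hzero : ∀ a, ρ a true * h a true + ρ a false * h a false = 0 := by
    intro a
    simp only [hh]
    linear_combination (hmean a) - Cap * (hρ1 a)
  have hsum : ∀ y : Fin m → Bool, (∑ a, X a (y a)) - m * Cap = ∑ a, h a (y a) := by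
    intro y
    rw [Finset.sum_sub_distrib, Finset.sum_const, Finset.card_univ, Fintype.card_fin,
      nsmul_eq_mul]
  have inner_eq : ∀ a a' : Fin m, a ≠ a' →
      (∑ y : Fin m → Bool, (∏ c, ρ c (y c)) * (h a (y a) * h a' (y a'))) = 0 := by
    intro a a' hne
    rw [sum_pi_bool_pair ρ hρ1 hne (h a) (h a'), hzero a, zero_mul]
  have inner_diag : ∀ a : Fin m,
      (∑ y : Fin m → Bool, (∏ c, ρ c (y c)) * (h a (y a) * h a (y a))) ≤ B^2 := by
    intro a
    rw [sum_pi_bool_single ρ hρ1 a (fun b => h a b * h a b)]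
    have h1 : ∀ b, h a b * h a b ≤ B^2 := by
      intro b
      obtain ⟨l, u⟩ := abs_le.mp (hB a b)
      simp only [hh]
      nlinarith
    calc ρ a true * (h a true * h a true) + ρ a false * (h a false * h a false)
        ≤ ρ a true * B^2 + ρ a false * B^2 :=
          add_le_add (mul_le_mul_of_nonneg_left (h1 true) (hρ0 a true))
            (mul_le_mul_of_nonneg_left (h1 false) (hρ0 a false))
      _ = B^2 := by rw [← add_mul, hρ1 a, one_mul]
  have expand : ∑ y : Fin m → Bool, (∏ a, ρ a (y a)) * ((∑ a, X a (y a)) - m * Cap)^2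
      = ∑ a : Fin m, ∑ a' : Fin m,
          ∑ y : Fin m → Bool, (∏ c, ρ c (y c)) * (h a (y a) * h a' (y a')) := by
    have e1 : ∀ y : Fin m → Bool, (∏ a, ρ a (y a)) * ((∑ a, X a (y a)) - m * Cap)^2
        = ∑ a : Fin m, ∑ a' : Fin m, (∏ c, ρ c (y c)) * (h a (y a) * h a' (y a')) := by
      intro y
      rw [hsum y, sq, Finset.sum_mul_sum]
      rw [Finset.mul_sum]
      refine Finset.sum_congr rfl fun a _ => ?_
      rw [Finset.mul_sum]
    rw [Finset.sum_congr rfl fun y _ => e1 y]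
    rw [Finset.sum_comm]
    refine Finset.sum_congr rfl fun a _ => ?_
    rw [Finset.sum_comm]
  rw [expand]
  have hrow : ∀ a : Fin m,
      (∑ a' : Fin m, ∑ y : Fin m → Bool, (∏ c, ρ c (y c)) * (h a (y a) * h a' (y a'))) ≤ B^2 := by
    intro a
    rw [Finset.sum_eq_single a (fun a' _ hne => inner_eq a a' (Ne.symm hne)) (by simp)]
    exact inner_diag a
  calc ∑ a : Fin m, ∑ a' : Fin m, ∑ y : Fin m → Bool, (∏ c, ρ c (y c)) * (h a (y a) * h a' (y a'))
      ≤ ∑ _a : Fin m, B^2 := Finset.sum_le_sum fun a _ => hrow a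
    _ = m * B^2 := by
        rw [Finset.sum_const, Finset.card_univ, Fintype.card_fin, nsmul_eq_mul]

lemma cheb_bound {ι : Type*} [Fintype ι] (w g : ι → ℝ) (c : ℝ)
    (hw : ∀ y, 0 ≤ w y) (hc : 0 < c) :
    ∑ y ∈ Finset.univ.filter (fun y => c ≤ g y), w y ≤ (∑ y, w y * (g y)^2) / c^2 := by
  rw [le_div_iff₀ (by positivity)]
  calc (∑ y ∈ Finset.univ.filter (fun y => c ≤ g y), w y) * c^2
      = ∑ y ∈ Finset.univ.filter (fun y => c ≤ g y), w y * c^2 := by rw [Finset.sum_mul]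
    _ ≤ ∑ y ∈ Finset.univ.filter (fun y => c ≤ g y), w y * (g y)^2 := by
        refine Finset.sum_le_sum fun y hy => ?_
        have hcy : c ≤ g y := by
          have := Finset.mem_filter.mp hy
          exact this.2
        have h2 : c^2 ≤ (g y)^2 := by nlinarith
        exact mul_le_mul_of_nonneg_left h2 (hw y)
    _ ≤ ∑ y, w y * (g y)^2 :=
        Finset.sum_le_sum_of_subset_of_nonneg (Finset.filter_subset _ _)
          (fun y _ _ => mul_nonneg (hw y) (sq_nonneg _))

end SumLemmas

section MeasAux

instance discreteFinsetFin (n : ℕ) : DiscreteMeasurableSpace (Finset (Fin n)) :=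
  ⟨fun _ => MeasurableSpace.measurableSet_top⟩

instance bern_finite (p : ℝ) : IsFiniteMeasure (bern p) := by
  constructor
  rw [bern, Measure.add_apply, Measure.smul_apply, Measure.smul_apply, smul_eq_mul, smul_eq_mul]
  simp only [measure_univ, mul_one]
  exact ENNReal.add_lt_top.mpr ⟨ENNReal.ofReal_lt_top, ENNReal.ofReal_lt_top⟩

lemma bern_apply_true (r : ℝ) : bern r {true} = ENNReal.ofReal r := by
  rw [bern, Measure.add_apply, Measure.smul_apply, Measure.smul_apply, smul_eq_mul, smul_eq_mul,
    Measure.dirac_apply, Measure.dirac_apply]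
  simp [Set.indicator]

lemma bern_apply_false (r : ℝ) : bern r {false} = ENNReal.ofReal (1 - r) := by
  rw [bern, Measure.add_apply, Measure.smul_apply, Measure.smul_apply, smul_eq_mul, smul_eq_mul,
    Measure.dirac_apply, Measure.dirac_apply]
  simp [Set.indicator]

lemma bern_prob {r : ℝ} (h0 : 0 ≤ r) (h1 : r ≤ 1) : IsProbabilityMeasure (bern r) := by
  constructor
  rw [bern, Measure.add_apply, Measure.smul_apply, Measure.smul_apply, smul_eq_mul, smul_eq_mul]
  simp only [measure_univ, mul_one]
  rw [← ENNReal.ofReal_add h0 (by linarith)]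
  norm_num

lemma measure_eq_sum_singletons {α : Type*} [Fintype α] [MeasurableSpace α]
    [MeasurableSingletonClass α] (μ : Measure α) (S : Set α) :
    μ S = ∑ x : α, S.indicator (fun x => μ {x}) x := by
  classical
  have hS : S = ⋃ x ∈ S.toFinset, ({x} : Set α) := by
    simp [Set.biUnion_of_singleton]
  have hd : (↑S.toFinset : Set α).PairwiseDisjoint (fun x => ({x} : Set α)) :=
    fun x _ y _ hxy => Set.disjoint_singleton.mpr hxy
  calc μ S = μ (⋃ x ∈ S.toFinset, ({x} : Set α)) := by rw [← hS]
    _ = ∑ x ∈ S.toFinset, μ {x} :=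
        measure_biUnion_finset hd (fun x _ => measurableSet_singleton x)
    _ = ∑ x ∈ S.toFinset, S.indicator (fun x => μ {x}) x :=
        Finset.sum_congr rfl fun x hx =>
          (Set.indicator_of_mem (show x ∈ S by simpa using hx) (fun y => μ {y})).symm
    _ = ∑ x : α, S.indicator (fun x => μ {x}) x :=
        Finset.sum_subset (Finset.subset_univ _)
          (fun x _ hx => Set.indicator_of_notMem (show x ∉ S by simpa using hx) (fun y => μ {y}))

lemma uniformFinset_singleton {α : Type*} [MeasurableSpace α] [MeasurableSingletonClass α]
    [DecidableEq α] (s : Finset α) (x : α) :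
    uniformFinset s {x} = (s.card : ℝ≥0∞)⁻¹ * (if x ∈ s then 1 else 0) := by
  rw [uniformFinset, Measure.smul_apply, smul_eq_mul]
  congr 1
  rw [Measure.finset_sum_apply]
  have h : ∀ z ∈ s, Measure.dirac z ({x} : Set α) = if z = x then 1 else 0 := by
    intro z _
    rw [Measure.dirac_apply]
    by_cases hzx : z = x <;> simp [Set.indicator, hzx]
  rw [Finset.sum_congr rfl h, Finset.sum_ite_eq' s x (fun _ => 1)]

lemma uniformFinset_univ {α : Type*} [MeasurableSpace α] [MeasurableSingletonClass α]
    (s : Finset α) (hs : s.Nonempty) : uniformFinset s Set.univ = 1 := by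
  rw [uniformFinset, Measure.smul_apply, smul_eq_mul]
  rw [Measure.finset_sum_apply]
  simp only [measure_univ, Finset.sum_const, nsmul_eq_mul, mul_one]
  exact ENNReal.inv_mul_cancel (by exact_mod_cast Finset.card_ne_zero.mpr hs)
    (ENNReal.natCast_ne_top _)

lemma pi_measure_singleton {m : ℕ} (μ : Fin m → Measure Bool) [∀ a, IsFiniteMeasure (μ a)]
    (U : Fin m → Bool) :
    Measure.pi μ {U} = ∏ a, μ a {U a} := by
  rw [← Set.univ_pi_singleton U, Measure.pi_pi]

lemma genMeasure_singleton (n m k : ℕ) (ν : Measure (Fin m → Finset (Fin n))) (p q : ℝ)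
    [SFinite ν] (σ : Fin n → Bool) (A : Fin m → Finset (Fin n)) (U V : Fin m → Bool) :
    genMeasure n m k ν p q {(σ, A, U, V)} =
      uniformFinset (sigmaSet n k) {σ} * (ν {A} *
        ((Measure.pi fun _ : Fin m => bern p) {U} * (Measure.pi fun _ : Fin m => bern q) {V})) := by
  have h1 : ({(σ, A, U, V)} : Set (GenSpace n m)) =
      ({σ} : Set (Fin n → Bool)) ×ˢ ({(A, U, V)} : Set _) := by
    rw [Set.singleton_prod_singleton]
  have h2 : ({(A, U, V)} : Set ((Fin m → Finset (Fin n)) × (Fin m → Bool) × (Fin m → Bool))) =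
      ({A} : Set (Fin m → Finset (Fin n))) ×ˢ ({(U, V)} : Set _) := by
    rw [Set.singleton_prod_singleton]
  have h3 : ({(U, V)} : Set ((Fin m → Bool) × (Fin m → Bool))) =
      ({U} : Set (Fin m → Bool)) ×ˢ ({V} : Set (Fin m → Bool)) := by
    rw [Set.singleton_prod_singleton]
  rw [genMeasure, h1, Measure.prod_prod, h2, Measure.prod_prod, h3, Measure.prod_prod]

end MeasAux

section Channel

/-- weight of a Bernoulli displayed bit -/
def bw (r : ℝ) (b : Bool) : ℝ≥0∞ := if b then ENNReal.ofReal r else ENNReal.ofReal (1 - r)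

/-- displayed-outcome distribution of test `a` -/
def rhoR (p q : ℝ) {n m : ℕ} (σ : Fin n → Bool) (A : Fin m → Finset (Fin n))
    (a : Fin m) (b : Bool) : ℝ :=
  if ∃ i ∈ A a, σ i = true then (if b then 1 - q else q) else (if b then p else 1 - p)

lemma bern_apply_bool (r : ℝ) (b : Bool) : bern r {b} = bw r b := by
  cases b
  · exact bern_apply_false r
  · exact bern_apply_true r

lemma coord_sum (p q : ℝ) (hp : 0 ≤ p) (hq : 0 ≤ q) (hpq : p + q < 1)
    (pos : Prop) [Decidable pos] (b : Bool) :
    (∑ c : Bool × Bool, if (if pos then !c.2 else c.1) = b then bw p c.1 * bw q c.2 else 0)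
    = ENNReal.ofReal (if pos then (if b then 1 - q else q) else (if b then p else 1 - p)) := by
  have hp1 : ENNReal.ofReal p + ENNReal.ofReal (1 - p) = 1 := by
    rw [← ENNReal.ofReal_add hp (by linarith)]; norm_num
  have hq1 : ENNReal.ofReal q + ENNReal.ofReal (1 - q) = 1 := by
    rw [← ENNReal.ofReal_add hq (by linarith)]; norm_num
  by_cases hpos : pos <;> cases b
  · simp [Fintype.sum_prod_type, Fintype.sum_bool, hpos, bw]
    rw [← add_mul, hp1, one_mul]
  · simp [Fintype.sum_prod_type, Fintype.sum_bool, hpos, bw]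
    rw [← add_mul, hp1, one_mul]
  · simp [Fintype.sum_prod_type, Fintype.sum_bool, hpos, bw]
    rw [← mul_add, hq1, mul_one]
  · simp [Fintype.sum_prod_type, Fintype.sum_bool, hpos, bw]
    rw [← mul_add, hq1, mul_one]

lemma L1 (p q : ℝ) (hp : 0 ≤ p) (hq : 0 ≤ q) (hpq : p + q < 1) {n m : ℕ}
    (σ : Fin n → Bool) (A : Fin m → Finset (Fin n)) (f : (Fin m → Bool) → ℝ≥0∞) :
    ∑ U : Fin m → Bool, ∑ V : Fin m → Bool,
      (∏ a, bw p (U a)) * ((∏ a, bw q (V a)) * f (displayedGen σ A U V))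
    = ∑ y : Fin m → Bool, (∏ a, ENNReal.ofReal (rhoR p q σ A a (y a))) * f y := by
  classical
  have comb : (∑ U : Fin m → Bool, ∑ V : Fin m → Bool,
      (∏ a, bw p (U a)) * ((∏ a, bw q (V a)) * f (displayedGen σ A U V)))
      = ∑ w : Fin m → Bool × Bool,
          (∏ a, bw p (w a).1 * bw q (w a).2) *
            f (fun a => if ∃ i ∈ A a, σ i = true then !(w a).2 else (w a).1) := by
    have step : (∑ U : Fin m → Bool, ∑ V : Fin m → Bool,
        (∏ a, bw p (U a)) * ((∏ a, bw q (V a)) * f (displayedGen σ A U V)))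
        = ∑ c : (Fin m → Bool) × (Fin m → Bool),
            (∏ a, bw p (c.1 a)) * ((∏ a, bw q (c.2 a)) * f (displayedGen σ A c.1 c.2)) := by
      rw [Fintype.sum_prod_type]
    rw [step]
    refine (Fintype.sum_equiv (Equiv.arrowProdEquivProdArrow (Fin m) (fun _ => Bool) (fun _ => Bool)) _ _ ?_).symm
    intro w
    have hUV : displayedGen σ A (fun a => (w a).1) (fun a => (w a).2)
        = fun a => if ∃ i ∈ A a, σ i = true then !(w a).2 else (w a).1 := rfl
    show (∏ a, bw p (w a).1 * bw q (w a).2) *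
        f (fun a => if ∃ i ∈ A a, σ i = true then !(w a).2 else (w a).1)
      = (∏ a, bw p (w a).1) * ((∏ a, bw q (w a).2) *
          f (displayedGen σ A (fun a => (w a).1) (fun a => (w a).2)))
    rw [Finset.prod_mul_distrib, hUV, mul_assoc]
  rw [comb]
  have grp : (∑ w : Fin m → Bool × Bool,
        (∏ a, bw p (w a).1 * bw q (w a).2) *
          f (fun a => if ∃ i ∈ A a, σ i = true then !(w a).2 else (w a).1))
      = ∑ y : Fin m → Bool,
          (∑ w ∈ Finset.univ.filter
              (fun w : Fin m → Bool × Bool =>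
                (fun a => if ∃ i ∈ A a, σ i = true then !(w a).2 else (w a).1) = y),
            ∏ a, bw p (w a).1 * bw q (w a).2) * f y := by
    have hfib := Finset.sum_fiberwise_eq_sum_filter
      (Finset.univ : Finset (Fin m → Bool × Bool)) (Finset.univ : Finset (Fin m → Bool))
      (fun w => (fun a => if ∃ i ∈ A a, σ i = true then !(w a).2 else (w a).1))
      (fun w => (∏ a, bw p (w a).1 * bw q (w a).2) *
        f (fun a => if ∃ i ∈ A a, σ i = true then !(w a).2 else (w a).1))
    simp only [Finset.mem_univ, Finset.filter_true] at hfib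
    rw [← hfib]
    refine Finset.sum_congr rfl fun y _ => ?_
    rw [Finset.sum_mul]
    refine Finset.sum_congr rfl fun w hw => ?_
    rw [(Finset.mem_filter.mp hw).2]
  rw [grp]
  refine Finset.sum_congr rfl fun y _ => ?_
  congr 1
  have fib : Finset.univ.filter
      (fun w : Fin m → Bool × Bool =>
        (fun a => if ∃ i ∈ A a, σ i = true then !(w a).2 else (w a).1) = y)
      = Fintype.piFinset (fun a => Finset.univ.filter
          (fun c : Bool × Bool => (if ∃ i ∈ A a, σ i = true then !c.2 else c.1) = y a)) := by
    ext w
    simp [Fintype.mem_piFinset, funext_iff]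
  rw [fib,
    ← Finset.prod_univ_sum
      (fun a => Finset.univ.filter
        (fun c : Bool × Bool => (if ∃ i ∈ A a, σ i = true then !c.2 else c.1) = y a))
      (fun _ c => bw p c.1 * bw q c.2)]
  refine Finset.prod_congr rfl fun a _ => ?_
  rw [Finset.sum_filter]
  exact coord_sum p q hp hq hpq (∃ i ∈ A a, σ i = true) (y a)

end Channel

section PerTest

def tauC (p q : ℝ) (b : Bool) : ℝ := if b then tC p q else 1 - tC p q

def XC (p q : ℝ) {n m : ℕ} (σ : Fin n → Bool) (A : Fin m → Finset (Fin n))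
    (a : Fin m) (b : Bool) : ℝ := Real.log (rhoR p q σ A a b / tauC p q b)

def BC (p q : ℝ) : ℝ :=
  |Real.log (p / tC p q)| + |Real.log ((1 - p) / (1 - tC p q))| +
  |Real.log ((1 - q) / tC p q)| + |Real.log (q / (1 - tC p q))| + |capC p q|

lemma abs_sub_le_abs_add_abs (a b : ℝ) : |a - b| ≤ |a| + |b| := by
  rw [sub_eq_add_neg]
  exact (abs_add_le _ _).trans (by rw [abs_neg])

variable {p q : ℝ} (hp : 0 ≤ p) (hq : 0 ≤ q) (hpq : p + q < 1)
variable {n m : ℕ} (σ : Fin n → Bool) (A : Fin m → Finset (Fin n))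

include hp hq hpq in
lemma rho_nonneg : ∀ (a : Fin m) b, 0 ≤ rhoR p q σ A a b := by
  intro a b
  unfold rhoR
  by_cases hpos : ∃ i ∈ A a, σ i = true <;> cases b <;> simp [hpos] <;> linarith

lemma rho_row : ∀ a : Fin m, rhoR p q σ A a true + rhoR p q σ A a false = 1 := by
  intro a
  unfold rhoR
  by_cases hpos : ∃ i ∈ A a, σ i = true <;> simp [hpos]

include hp hq hpq in
lemma rho_mean : ∀ a : Fin m,
    rhoR p q σ A a true * XC p q σ A a true + rhoR p q σ A a false * XC p q σ A a false
      = capC p q := by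
  intro a
  by_cases hpos : ∃ i ∈ A a, σ i = true
  · have ht : rhoR p q σ A a true = 1 - q := by simp [rhoR, hpos]
    have hf : rhoR p q σ A a false = q := by simp [rhoR, hpos]
    have hXt : XC p q σ A a true = Real.log ((1 - q) / tC p q) := by
      rw [XC, ht]; simp [tauC]
    have hXf : XC p q σ A a false = Real.log (q / (1 - tC p q)) := by
      rw [XC, hf]; simp [tauC]
    rw [ht, hf, hXt, hXf]
    have h1 : capC p q = klBer q (1 - tC p q) := by
      rw [capC]; congr 1; rw [tC]; ring
    rw [h1, klBer]
    have h2 : 1 - (1 - tC p q) = tC p q := by rw [sub_sub_cancel]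
    rw [h2]
    ring
  · have ht : rhoR p q σ A a true = p := by simp [rhoR, hpos]
    have hf : rhoR p q σ A a false = 1 - p := by simp [rhoR, hpos]
    have hXt : XC p q σ A a true = Real.log (p / tC p q) := by
      rw [XC, ht]; simp [tauC]
    have hXf : XC p q σ A a false = Real.log ((1 - p) / (1 - tC p q)) := by
      rw [XC, hf]; simp [tauC]
    rw [ht, hf, hXt, hXf]
    rw [← key_identity hp hq hpq, klBer]

lemma X_abs : ∀ (a : Fin m) b, |XC p q σ A a b - capC p q| ≤ BC p q := by
  intro a b
  have h := abs_sub_le_abs_add_abs (XC p q σ A a b) (capC p q)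
  have h1 := abs_nonneg (Real.log (p / tC p q))
  have h2 := abs_nonneg (Real.log ((1 - p) / (1 - tC p q)))
  have h3 := abs_nonneg (Real.log ((1 - q) / tC p q))
  have h4 := abs_nonneg (Real.log (q / (1 - tC p q)))
  have hX : |XC p q σ A a b| ≤ |Real.log (p / tC p q)| + |Real.log ((1 - p) / (1 - tC p q))| +
      |Real.log ((1 - q) / tC p q)| + |Real.log (q / (1 - tC p q))| := by
    have hcases : XC p q σ A a b = Real.log (p / tC p q) ∨
        XC p q σ A a b = Real.log ((1 - p) / (1 - tC p q)) ∨
        XC p q σ A a b = Real.log ((1 - q) / tC p q) ∨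
        XC p q σ A a b = Real.log (q / (1 - tC p q)) := by
      unfold XC rhoR tauC
      by_cases hpos : ∃ i ∈ A a, σ i = true <;> cases b <;> simp [hpos]
    rcases hcases with hcs | hcs | hcs | hcs <;> rw [hcs] <;> linarith
  unfold BC
  linarith

end PerTest

section MainBound

lemma main_bound (p q : ℝ) (hp : 0 ≤ p) (hq : 0 ≤ q) (hpq : p + q < 1)
    (n m k : ℕ) (ν : Measure (Fin m → Finset (Fin n))) (hν : IsProbabilityMeasure ν)
    (est : (Fin m → Finset (Fin n)) → (Fin m → Bool) → (Fin n → Bool))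
    (c : ℝ) (hc : 0 < c) (hkn : (sigmaSet n k).Nonempty) :
    genMeasure n m k ν p q {ω : GenSpace n m |
        est ω.2.1 (displayedGen ω.1 ω.2.1 ω.2.2.1 ω.2.2.2) = ω.1}
      ≤ ENNReal.ofReal ((m : ℝ) * (BC p q)^2 / c^2)
        + ((sigmaSet n k).card : ℝ≥0∞)⁻¹ *
            ENNReal.ofReal (Real.exp ((m : ℝ) * capC p q + c)) := by
  classical
  haveI := hν
  have hq1 : q < 1 := by linarith
  have hp1 : p < 1 := by linarith
  have ht0 := tC_pos (p := p) (q := q)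
  have ht1 := tC_lt_one (p := p) (q := q)
  set S : Set (GenSpace n m) :=
    {ω : GenSpace n m | est ω.2.1 (displayedGen ω.1 ω.2.1 ω.2.2.1 ω.2.2.2) = ω.1} with hS
  -- Step 1: expand the measure as a quadruple sum
  have hexp : genMeasure n m k ν p q S
      = ∑ σ : Fin n → Bool, ∑ A : Fin m → Finset (Fin n),
          ∑ U : Fin m → Bool, ∑ V : Fin m → Bool,
          (if est A (displayedGen σ A U V) = σ then
            uniformFinset (sigmaSet n k) {σ} *
              (ν {A} * ((∏ a, bw p (U a)) * (∏ a, bw q (V a)))) else 0) := by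
    rw [measure_eq_sum_singletons (genMeasure n m k ν p q) S]
    rw [Fintype.sum_prod_type]
    refine Finset.sum_congr rfl fun σ _ => ?_
    rw [Fintype.sum_prod_type]
    refine Finset.sum_congr rfl fun A _ => ?_
    rw [Fintype.sum_prod_type]
    refine Finset.sum_congr rfl fun U _ => ?_
    refine Finset.sum_congr rfl fun V _ => ?_
    rw [Set.indicator_apply]
    have hmem : ((σ, A, U, V) : GenSpace n m) ∈ S ↔ est A (displayedGen σ A U V) = σ :=
      Iff.rfl
    have hU : (Measure.pi fun _ : Fin m => bern p) {U} = ∏ a, bw p (U a) := by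
      rw [pi_measure_singleton]
      exact Finset.prod_congr rfl fun a _ => bern_apply_bool p (U a)
    have hV : (Measure.pi fun _ : Fin m => bern q) {V} = ∏ a, bw q (V a) := by
      rw [pi_measure_singleton]
      exact Finset.prod_congr rfl fun a _ => bern_apply_bool q (V a)
    rw [genMeasure_singleton n m k ν p q σ A U V, hU, hV]
    exact if_congr hmem rfl rfl
  -- Step 2: rewrite the inner double sums via the displayed-outcome distribution
  have hexp2 : genMeasure n m k ν p q S
      = ∑ σ : Fin n → Bool, ∑ A : Fin m → Finset (Fin n),
          uniformFinset (sigmaSet n k) {σ} *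
            (ν {A} * ∑ y : Fin m → Bool,
              (∏ a, ENNReal.ofReal (rhoR p q σ A a (y a))) *
                (if est A y = σ then (1 : ℝ≥0∞) else 0)) := by
    rw [hexp]
    refine Finset.sum_congr rfl fun σ _ => Finset.sum_congr rfl fun A _ => ?_
    rw [← L1 p q hp hq hpq σ A (fun y => if est A y = σ then (1 : ℝ≥0∞) else 0)]
    simp only [Finset.mul_sum]
    refine Finset.sum_congr rfl fun U _ => Finset.sum_congr rfl fun V _ => ?_
    by_cases hcond : est A (displayedGen σ A U V) = σ <;>
      simp only [hcond, if_true, if_false, reduceIte, mul_one, mul_zero]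
    all_goals try ring
  -- Step 3: split the indicator
  have hsplit : ∀ (σ : Fin n → Bool) (A : Fin m → Finset (Fin n)) (y : Fin m → Bool),
      (if est A y = σ then (1 : ℝ≥0∞) else 0) ≤
        (if c ≤ (∑ a, XC p q σ A a (y a)) - m * capC p q then (1 : ℝ≥0∞) else 0)
        + (if est A y = σ ∧ ¬ (c ≤ (∑ a, XC p q σ A a (y a)) - m * capC p q)
            then (1 : ℝ≥0∞) else 0) := by
    intro σ A y
    by_cases h1 : est A y = σ <;>
      by_cases h2 : c ≤ (∑ a, XC p q σ A a (y a)) - m * capC p q <;>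
      simp [h1, h2]
  -- total masses
  have husum : ∑ σ : Fin n → Bool, uniformFinset (sigmaSet n k) {σ} = 1 := by
    have h := measure_eq_sum_singletons (uniformFinset (sigmaSet n k)) Set.univ
    simp only [Set.indicator_univ] at h
    rw [← h, uniformFinset_univ _ hkn]
  have hνsum : ∑ A : Fin m → Finset (Fin n), ν {A} = 1 := by
    have h := measure_eq_sum_singletons ν Set.univ
    simp only [Set.indicator_univ] at h
    rw [← h, measure_univ]
  -- T1 inner bound (Chebyshev)
  have hT1inner : ∀ (σ : Fin n → Bool) (A : Fin m → Finset (Fin n)),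
      (∑ y : Fin m → Bool, (∏ a, ENNReal.ofReal (rhoR p q σ A a (y a))) *
        (if c ≤ (∑ a, XC p q σ A a (y a)) - m * capC p q then (1 : ℝ≥0∞) else 0))
      ≤ ENNReal.ofReal ((m : ℝ) * (BC p q)^2 / c^2) := by
    intro σ A
    have hρ0 : ∀ (a : Fin m) b, 0 ≤ rhoR p q σ A a b := rho_nonneg hp hq hpq σ A
    have hPnn : ∀ y : Fin m → Bool, 0 ≤ ∏ a, rhoR p q σ A a (y a) :=
      fun y => Finset.prod_nonneg fun a _ => hρ0 a (y a)
    have step1 : (∑ y : Fin m → Bool, (∏ a, ENNReal.ofReal (rhoR p q σ A a (y a))) *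
        (if c ≤ (∑ a, XC p q σ A a (y a)) - m * capC p q then (1:ℝ≥0∞) else 0))
        = ENNReal.ofReal (∑ y ∈ Finset.univ.filter
            (fun y : Fin m → Bool => c ≤ (∑ a, XC p q σ A a (y a)) - m * capC p q),
            ∏ a, rhoR p q σ A a (y a)) := by
      rw [ENNReal.ofReal_sum_of_nonneg (fun y _ => hPnn y), Finset.sum_filter]
      refine Finset.sum_congr rfl fun y _ => ?_
      rw [← ENNReal.ofReal_prod_of_nonneg (fun a _ => hρ0 a (y a))]
      by_cases hy : c ≤ (∑ a, XC p q σ A a (y a)) - m * capC p q <;> simp [hy]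
    rw [step1]
    apply ENNReal.ofReal_le_ofReal
    have hcheb := cheb_bound (fun y : Fin m → Bool => ∏ a, rhoR p q σ A a (y a))
      (fun y => (∑ a, XC p q σ A a (y a)) - m * capC p q) c (fun y => hPnn y) hc
    refine hcheb.trans ?_
    have hvar := var_bound (rhoR p q σ A) (XC p q σ A) (capC p q) (BC p q)
      hρ0 (rho_row σ A) (rho_mean hp hq hpq σ A) (X_abs σ A)
    have hc2 : (0:ℝ) < c^2 := by positivity
    gcongr
  -- T2 pointwise bound
  have hpt : ∀ (σ : Fin n → Bool) (A : Fin m → Finset (Fin n)) (y : Fin m → Bool),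
      (∏ a, ENNReal.ofReal (rhoR p q σ A a (y a))) *
        (if est A y = σ ∧ ¬ (c ≤ (∑ a, XC p q σ A a (y a)) - m * capC p q)
          then (1 : ℝ≥0∞) else 0)
      ≤ ENNReal.ofReal (Real.exp ((m : ℝ) * capC p q + c)) *
          ((∏ a, ENNReal.ofReal (tauC p q (y a))) *
            (if est A y = σ then (1 : ℝ≥0∞) else 0)) := by
    intro σ A y
    by_cases hcase : est A y = σ ∧ ¬ (c ≤ (∑ a, XC p q σ A a (y a)) - m * capC p q)
    · rw [if_pos hcase, if_pos hcase.1, mul_one, mul_one]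
      have hρ0 : ∀ (a : Fin m) b, 0 ≤ rhoR p q σ A a b := rho_nonneg hp hq hpq σ A
      have hτpos : ∀ b, 0 < tauC p q b := by
        intro b
        cases b
        · show (0:ℝ) < 1 - tC p q
          linarith
        · exact ht0
      have hτnn : 0 ≤ ∏ a, tauC p q (y a) :=
        Finset.prod_nonneg fun a _ => (hτpos (y a)).le
      have hreal : (∏ a, rhoR p q σ A a (y a)) ≤
          Real.exp ((m:ℝ) * capC p q + c) * ∏ a, tauC p q (y a) := by
        by_cases hall : ∀ a : Fin m, 0 < rhoR p q σ A a (y a)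
        · have heq : (∏ a, rhoR p q σ A a (y a))
              = Real.exp (∑ a, XC p q σ A a (y a)) * ∏ a, tauC p q (y a) := by
            rw [Real.exp_sum, ← Finset.prod_mul_distrib]
            refine Finset.prod_congr rfl fun a _ => ?_
            simp only [XC]
            rw [Real.exp_log (div_pos (hall a) (hτpos (y a))),
              div_mul_cancel₀ _ (ne_of_gt (hτpos (y a)))]
          rw [heq]
          apply mul_le_mul_of_nonneg_right _ hτnn
          apply Real.exp_le_exp.mpr
          have := not_le.mp hcase.2
          linarith
        · push_neg at hall
          obtain ⟨a0, ha0⟩ := hall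
          have hz : rhoR p q σ A a0 (y a0) = 0 := le_antisymm ha0 (hρ0 a0 (y a0))
          rw [Finset.prod_eq_zero (Finset.mem_univ a0) hz]
          exact mul_nonneg (Real.exp_nonneg _) hτnn
      calc (∏ a, ENNReal.ofReal (rhoR p q σ A a (y a)))
          = ENNReal.ofReal (∏ a, rhoR p q σ A a (y a)) :=
            (ENNReal.ofReal_prod_of_nonneg (fun a _ => hρ0 a (y a))).symm
        _ ≤ ENNReal.ofReal (Real.exp ((m:ℝ) * capC p q + c) * ∏ a, tauC p q (y a)) :=
            ENNReal.ofReal_le_ofReal hreal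
        _ = ENNReal.ofReal (Real.exp ((m:ℝ) * capC p q + c)) *
              ENNReal.ofReal (∏ a, tauC p q (y a)) :=
            ENNReal.ofReal_mul (Real.exp_nonneg _)
        _ = ENNReal.ofReal (Real.exp ((m:ℝ) * capC p q + c)) *
              ∏ a, ENNReal.ofReal (tauC p q (y a)) := by
            rw [ENNReal.ofReal_prod_of_nonneg (fun a _ => (hτpos (y a)).le)]
    · rw [if_neg hcase, mul_zero]
      exact zero_le
  -- Q normalization
  have hQsum : ∑ y : Fin m → Bool, (∏ a, ENNReal.ofReal (tauC p q (y a))) = 1 := by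
    rw [sum_pi_bool_prod (fun (_ : Fin m) (b : Bool) => ENNReal.ofReal (tauC p q b))]
    have h1 : ENNReal.ofReal (tauC p q true) + ENNReal.ofReal (tauC p q false) = 1 := by
      have e1 : tauC p q true = tC p q := rfl
      have e2 : tauC p q false = 1 - tC p q := rfl
      rw [e1, e2, ← ENNReal.ofReal_add (by linarith) (by linarith)]
      norm_num
    rw [Finset.prod_congr rfl fun a _ => h1, Finset.prod_const, one_pow]
  -- assemble
  have huwle : ∀ σ : Fin n → Bool,
      uniformFinset (sigmaSet n k) {σ} ≤ ((sigmaSet n k).card : ℝ≥0∞)⁻¹ := by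
    intro σ
    rw [uniformFinset_singleton]
    by_cases h : σ ∈ sigmaSet n k <;> simp [h]
  have hT1 : (∑ σ : Fin n → Bool, ∑ A : Fin m → Finset (Fin n),
        uniformFinset (sigmaSet n k) {σ} * (ν {A} *
          ∑ y : Fin m → Bool, (∏ a, ENNReal.ofReal (rhoR p q σ A a (y a))) *
            (if c ≤ (∑ a, XC p q σ A a (y a)) - m * capC p q then (1:ℝ≥0∞) else 0)))
      ≤ ENNReal.ofReal ((m : ℝ) * (BC p q)^2 / c^2) := by
    calc (∑ σ : Fin n → Bool, ∑ A : Fin m → Finset (Fin n),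
        uniformFinset (sigmaSet n k) {σ} * (ν {A} *
          ∑ y : Fin m → Bool, (∏ a, ENNReal.ofReal (rhoR p q σ A a (y a))) *
            (if c ≤ (∑ a, XC p q σ A a (y a)) - m * capC p q then (1:ℝ≥0∞) else 0)))
        ≤ ∑ σ : Fin n → Bool, ∑ A : Fin m → Finset (Fin n),
            uniformFinset (sigmaSet n k) {σ} *
              (ν {A} * ENNReal.ofReal ((m : ℝ) * (BC p q)^2 / c^2)) :=
          Finset.sum_le_sum fun σ _ => Finset.sum_le_sum fun A _ =>
            mul_le_mul_right (mul_le_mul_right (hT1inner σ A) _) _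
      _ = ENNReal.ofReal ((m : ℝ) * (BC p q)^2 / c^2) := by
          have h1 : ∀ σ : Fin n → Bool, (∑ A : Fin m → Finset (Fin n),
              ν {A} * ENNReal.ofReal ((m : ℝ) * (BC p q)^2 / c^2))
              = ENNReal.ofReal ((m : ℝ) * (BC p q)^2 / c^2) := by
            intro σ
            rw [← Finset.sum_mul, hνsum, one_mul]
          calc (∑ σ : Fin n → Bool, ∑ A : Fin m → Finset (Fin n),
              uniformFinset (sigmaSet n k) {σ} *
                (ν {A} * ENNReal.ofReal ((m : ℝ) * (BC p q)^2 / c^2)))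
              = ∑ σ : Fin n → Bool, uniformFinset (sigmaSet n k) {σ} *
                  ENNReal.ofReal ((m : ℝ) * (BC p q)^2 / c^2) := by
                refine Finset.sum_congr rfl fun σ _ => ?_
                rw [← Finset.mul_sum, h1 σ]
            _ = ENNReal.ofReal ((m : ℝ) * (BC p q)^2 / c^2) := by
                rw [← Finset.sum_mul, husum, one_mul]
  have hT2 : (∑ σ : Fin n → Bool, ∑ A : Fin m → Finset (Fin n),
        uniformFinset (sigmaSet n k) {σ} * (ν {A} *
          ∑ y : Fin m → Bool, (∏ a, ENNReal.ofReal (rhoR p q σ A a (y a))) *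
            (if est A y = σ ∧ ¬ (c ≤ (∑ a, XC p q σ A a (y a)) - m * capC p q)
              then (1:ℝ≥0∞) else 0)))
      ≤ ((sigmaSet n k).card : ℝ≥0∞)⁻¹ *
          ENNReal.ofReal (Real.exp ((m : ℝ) * capC p q + c)) := by
    have hinner2 : ∀ (A : Fin m → Finset (Fin n)),
        (∑ σ : Fin n → Bool, ∑ y : Fin m → Bool,
          ENNReal.ofReal (Real.exp ((m : ℝ) * capC p q + c)) *
            ((∏ a, ENNReal.ofReal (tauC p q (y a))) *
              (if est A y = σ then (1:ℝ≥0∞) else 0)))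
        = ENNReal.ofReal (Real.exp ((m : ℝ) * capC p q + c)) := by
      intro A
      rw [Finset.sum_comm]
      have h1 : ∀ y : Fin m → Bool,
          (∑ σ : Fin n → Bool,
            ENNReal.ofReal (Real.exp ((m : ℝ) * capC p q + c)) *
              ((∏ a, ENNReal.ofReal (tauC p q (y a))) *
                (if est A y = σ then (1:ℝ≥0∞) else 0)))
          = ENNReal.ofReal (Real.exp ((m : ℝ) * capC p q + c)) *
              (∏ a, ENNReal.ofReal (tauC p q (y a))) := by
        intro y
        rw [← Finset.mul_sum, ← Finset.mul_sum]
        rw [Finset.sum_ite_eq Finset.univ (est A y) (fun _ => (1:ℝ≥0∞))]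
        simp
      rw [Finset.sum_congr rfl fun y _ => h1 y, ← Finset.mul_sum, hQsum, mul_one]
    calc (∑ σ : Fin n → Bool, ∑ A : Fin m → Finset (Fin n),
        uniformFinset (sigmaSet n k) {σ} * (ν {A} *
          ∑ y : Fin m → Bool, (∏ a, ENNReal.ofReal (rhoR p q σ A a (y a))) *
            (if est A y = σ ∧ ¬ (c ≤ (∑ a, XC p q σ A a (y a)) - m * capC p q)
              then (1:ℝ≥0∞) else 0)))
        ≤ ∑ σ : Fin n → Bool, ∑ A : Fin m → Finset (Fin n),
            ((sigmaSet n k).card : ℝ≥0∞)⁻¹ * (ν {A} *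
              ∑ y : Fin m → Bool,
                ENNReal.ofReal (Real.exp ((m : ℝ) * capC p q + c)) *
                  ((∏ a, ENNReal.ofReal (tauC p q (y a))) *
                    (if est A y = σ then (1:ℝ≥0∞) else 0))) := by
          refine Finset.sum_le_sum fun σ _ => Finset.sum_le_sum fun A _ => ?_
          refine mul_le_mul' (huwle σ) (mul_le_mul_right ?_ _)
          exact Finset.sum_le_sum fun y _ => hpt σ A y
      _ = ∑ A : Fin m → Finset (Fin n), ∑ σ : Fin n → Bool,
            ((sigmaSet n k).card : ℝ≥0∞)⁻¹ * (ν {A} *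
              ∑ y : Fin m → Bool,
                ENNReal.ofReal (Real.exp ((m : ℝ) * capC p q + c)) *
                  ((∏ a, ENNReal.ofReal (tauC p q (y a))) *
                    (if est A y = σ then (1:ℝ≥0∞) else 0))) := Finset.sum_comm
      _ = ∑ A : Fin m → Finset (Fin n),
            ((sigmaSet n k).card : ℝ≥0∞)⁻¹ * (ν {A} *
              ENNReal.ofReal (Real.exp ((m : ℝ) * capC p q + c))) := by
          refine Finset.sum_congr rfl fun A _ => ?_
          rw [← Finset.mul_sum, ← Finset.mul_sum]
          congr 1
          congr 1
          exact hinner2 A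
      _ = ((sigmaSet n k).card : ℝ≥0∞)⁻¹ *
            ENNReal.ofReal (Real.exp ((m : ℝ) * capC p q + c)) := by
          rw [← Finset.mul_sum, ← Finset.sum_mul, hνsum, one_mul]
  rw [hexp2]
  calc (∑ σ : Fin n → Bool, ∑ A : Fin m → Finset (Fin n),
      uniformFinset (sigmaSet n k) {σ} *
        (ν {A} * ∑ y : Fin m → Bool,
          (∏ a, ENNReal.ofReal (rhoR p q σ A a (y a))) *
            (if est A y = σ then (1 : ℝ≥0∞) else 0)))
      ≤ ∑ σ : Fin n → Bool, ∑ A : Fin m → Finset (Fin n),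
          (uniformFinset (sigmaSet n k) {σ} * (ν {A} *
            ∑ y : Fin m → Bool, (∏ a, ENNReal.ofReal (rhoR p q σ A a (y a))) *
              (if c ≤ (∑ a, XC p q σ A a (y a)) - m * capC p q then (1:ℝ≥0∞) else 0))
          + uniformFinset (sigmaSet n k) {σ} * (ν {A} *
            ∑ y : Fin m → Bool, (∏ a, ENNReal.ofReal (rhoR p q σ A a (y a))) *
              (if est A y = σ ∧ ¬ (c ≤ (∑ a, XC p q σ A a (y a)) - m * capC p q)
                then (1:ℝ≥0∞) else 0))) := by
        refine Finset.sum_le_sum fun σ _ => Finset.sum_le_sum fun A _ => ?_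
        rw [← mul_add, ← mul_add]
        refine mul_le_mul_right (mul_le_mul_right ?_ _) _
        rw [← Finset.sum_add_distrib]
        refine Finset.sum_le_sum fun y _ => ?_
        rw [← mul_add]
        exact mul_le_mul_right (hsplit σ A y) _
    _ = (∑ σ : Fin n → Bool, ∑ A : Fin m → Finset (Fin n),
          uniformFinset (sigmaSet n k) {σ} * (ν {A} *
            ∑ y : Fin m → Bool, (∏ a, ENNReal.ofReal (rhoR p q σ A a (y a))) *
              (if c ≤ (∑ a, XC p q σ A a (y a)) - m * capC p q then (1:ℝ≥0∞) else 0)))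
        + (∑ σ : Fin n → Bool, ∑ A : Fin m → Finset (Fin n),
            uniformFinset (sigmaSet n k) {σ} * (ν {A} *
              ∑ y : Fin m → Bool, (∏ a, ENNReal.ofReal (rhoR p q σ A a (y a))) *
                (if est A y = σ ∧ ¬ (c ≤ (∑ a, XC p q σ A a (y a)) - m * capC p q)
                  then (1:ℝ≥0∞) else 0))) := by
        rw [← Finset.sum_add_distrib]
        refine Finset.sum_congr rfl fun σ _ => ?_
        rw [← Finset.sum_add_distrib]
    _ ≤ ENNReal.ofReal ((m : ℝ) * (BC p q)^2 / c^2)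
        + ((sigmaSet n k).card : ℝ≥0∞)⁻¹ *
            ENNReal.ofReal (Real.exp ((m : ℝ) * capC p q + c)) := add_le_add hT1 hT2

end MainBound

section Counting

lemma sigmaSet_card (n k : ℕ) : (sigmaSet n k).card = n.choose k := by
  classical
  have h := Finset.card_bij'
    (i := fun (σ : Fin n → Bool) (_ : σ ∈ sigmaSet n k) => Finset.univ.filter (fun i => σ i = true))
    (j := fun (S : Finset (Fin n)) (_ : S ∈ Finset.powersetCard k (Finset.univ : Finset (Fin n)))
      => fun i => decide (i ∈ S))
    (hi := ?_) (hj := ?_) (left_inv := ?_) (right_inv := ?_)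
  · rw [h, Finset.card_powersetCard, Finset.card_univ, Fintype.card_fin]
  · intro σ hσ
    rw [Finset.mem_powersetCard]
    exact ⟨Finset.filter_subset _ _, (Finset.mem_filter.mp hσ).2⟩
  · intro S hS
    rw [Finset.mem_powersetCard] at hS
    rw [sigmaSet, Finset.mem_filter]
    refine ⟨Finset.mem_univ _, ?_⟩
    have he : Finset.univ.filter (fun i => decide (i ∈ S) = true) = S := by
      ext i; simp
    rw [he]
    exact hS.2
  · intro σ hσ
    funext i
    simp
  · intro S hS
    ext i
    simp

lemma choose_lower {n k : ℕ} (hk : 1 ≤ k) (h2 : 2 * k ≤ n) :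
    ((n : ℝ) / (2 * k)) ^ k ≤ (n.choose k : ℝ) := by
  have hkn : k ≤ n := le_trans (by omega) h2
  have h1 : (((n + 1 - k : ℕ) : ℝ)) ^ k / (k.factorial : ℝ) ≤ (n.choose k : ℝ) :=
    Nat.pow_le_choose k n
  refine le_trans ?_ h1
  have hkpos : (0:ℝ) < k := by exact_mod_cast hk
  have hfact : (k.factorial : ℝ) ≤ (k : ℝ)^k := by exact_mod_cast Nat.factorial_le_pow k
  have hcast : ((n + 1 - k : ℕ) : ℝ) = (n : ℝ) + 1 - k := by
    have : k ≤ n + 1 := by omega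
    push_cast [Nat.cast_sub this]
    ring
  have h2' : 2 * (k:ℝ) ≤ n := by exact_mod_cast h2
  have hnk : (n:ℝ)/2 ≤ ((n + 1 - k : ℕ) : ℝ) := by
    rw [hcast]; linarith
  have e1 : ((n : ℝ) / (2 * k)) ^ k = ((n:ℝ)/2)^k / (k:ℝ)^k := by
    rw [← div_pow, div_div]
  rw [e1]
  exact div_le_div₀ (by positivity) (pow_le_pow_left₀ (by positivity) hnk k)
    (by exact_mod_cast k.factorial_pos) hfact

end Counting

set_option maxHeartbeats 1000000

/-- **Universal converse for the p–q channel** (Theorem 2.3).  With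
`φ = (h(p)-h(q))/(1-p-q)` and `m_COUNT = k·log(n/k)/D(q‖1/(1+e^φ))`, if
`m ≤ (1-ε)·m_COUNT` then for every (random) non-adaptive test design and every estimator
of `σ` from the design and the displayed outcomes, the probability of exact recovery does
not tend to `1`. -/
theorem noisy_group_testing_converse
    (p q θ ε : ℝ)
    (hp : 0 ≤ p) (hq : 0 ≤ q) (hpq : p + q < 1)
    (hθ0 : 0 < θ) (hθ1 : θ < 1) (hε : 0 < ε)
    (k m : ℕ → ℕ)
    (hk : ∀ n, k n = ⌈(n : ℝ) ^ θ⌉₊)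
    (hm : ∀ n : ℕ, (m n : ℝ) ≤ (1 - ε) *
      (1 / klBer q (1 / (1 + Real.exp ((binEnt p - binEnt q) / (1 - p - q)))) *
        (k n * Real.log (n / k n))))
    (ν : ∀ n : ℕ, Measure (Fin (m n) → Finset (Fin n)))
    (hν : ∀ n, IsProbabilityMeasure (ν n))
    (est : ∀ n : ℕ, (Fin (m n) → Finset (Fin n)) → (Fin (m n) → Bool) → (Fin n → Bool)) :
    ¬ Filter.Tendsto
      (fun n => genMeasure n (m n) (k n) (ν n) p q
        {ω | est n ω.2.1 (displayedGen ω.1 ω.2.1 ω.2.2.1 ω.2.2.2) = ω.1})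
      Filter.atTop (nhds 1) := by
  intro hten
  classical
  have hp1 : p < 1 := by linarith
  have hq1 : q < 1 := by linarith
  have hCap : 0 < capC p q := capC_pos hp hq hpq
  have hB0 : 0 ≤ BC p q := by
    unfold BC
    positivity
  set ε' : ℝ := min ε (1/2) with hε'def
  have hε'0 : 0 < ε' := lt_min hε (by norm_num)
  have hε'h : ε' ≤ 1/2 := min_le_right _ _
  have hε'ε : ε' ≤ ε := min_le_left _ _
  set L : ℝ := max (max (16 * (BC p q)^2 / (capC p q * ε'^2))
    ((2/ε') * (2 * Real.log 2 + Real.log 4))) 1 with hLdef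
  have hlog2 : (0:ℝ) < Real.log 2 := Real.log_pos (by norm_num)
  -- eventually, the counting conditions hold
  have hev : ∀ᶠ (N : ℕ) in Filter.atTop,
      1 ≤ k N ∧ 2 * k N ≤ N ∧ L ≤ Real.log ((N:ℝ)/(k N)) := by
    have h1 : Filter.Tendsto (fun (N:ℕ) => Real.log (N:ℝ)) Filter.atTop Filter.atTop :=
      Real.tendsto_log_atTop.comp tendsto_natCast_atTop_atTop
    have htend : Filter.Tendsto (fun (N:ℕ) => (1-θ) * Real.log (N:ℝ) - Real.log 2)
        Filter.atTop Filter.atTop := by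
      apply Filter.tendsto_atTop_add_const_right
      exact h1.const_mul_atTop (by linarith : (0:ℝ) < 1-θ)
    have hev1 : ∀ᶠ (N:ℕ) in Filter.atTop,
        max L (Real.log 4) ≤ (1-θ)*Real.log (N:ℝ) - Real.log 2 :=
      htend.eventually_ge_atTop _
    have hev2 : ∀ᶠ (N:ℕ) in Filter.atTop, 1 ≤ N := Filter.eventually_ge_atTop 1
    filter_upwards [hev1, hev2] with N h1' h2'
    have hN1 : (1:ℝ) ≤ N := by exact_mod_cast h2'
    have hNpos : (0:ℝ) < N := by linarith
    have hθpos : (0:ℝ) < (N:ℝ)^θ := Real.rpow_pos_of_pos hNpos θ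
    have hk1 : 1 ≤ k N := by
      rw [hk N]
      exact Nat.one_le_ceil_iff.mpr hθpos
    have hθ1' : (1:ℝ) ≤ (N:ℝ)^θ := by
      calc (1:ℝ) = (N:ℝ)^(0:ℝ) := (Real.rpow_zero _).symm
        _ ≤ (N:ℝ)^θ := Real.rpow_le_rpow_of_exponent_le hN1 (le_of_lt hθ0)
    have hkub : (k N : ℝ) ≤ 2*(N:ℝ)^θ := by
      rw [hk N]
      have h3 : ((⌈(N:ℝ)^θ⌉₊ : ℕ):ℝ) < (N:ℝ)^θ + 1 := Nat.ceil_lt_add_one (le_of_lt hθpos)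
      linarith
    have hsplitN : (N:ℝ) = (N:ℝ)^θ * (N:ℝ)^(1-θ) := by
      rw [← Real.rpow_add hNpos]
      norm_num
    have h1θpos : (0:ℝ) < (N:ℝ)^(1-θ) := Real.rpow_pos_of_pos hNpos _
    have hlogN1θ : Real.log ((N:ℝ)^(1-θ)) = (1-θ)*Real.log (N:ℝ) := Real.log_rpow hNpos _
    have hge4 : (4:ℝ) ≤ (N:ℝ)^(1-θ) := by
      have h4 : Real.log 4 ≤ (1-θ)*Real.log (N:ℝ) := by
        have := le_trans (le_max_right _ _) h1'
        linarith
      calc (4:ℝ) = Real.exp (Real.log 4) := (Real.exp_log (by norm_num)).symm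
        _ ≤ Real.exp ((1-θ)*Real.log (N:ℝ)) := Real.exp_le_exp.mpr h4
        _ = (N:ℝ)^(1-θ) := by rw [← hlogN1θ, Real.exp_log h1θpos]
    have h2k : 2 * k N ≤ N := by
      have hr : ((2 * k N : ℕ) : ℝ) ≤ (N:ℝ) := by
        push_cast
        calc 2*(k N:ℝ) ≤ 4 * (N:ℝ)^θ := by linarith
          _ ≤ (N:ℝ)^θ * (N:ℝ)^(1-θ) := by nlinarith [hθpos, hge4]
          _ = N := hsplitN.symm
      exact_mod_cast hr
    have hxL : L ≤ Real.log ((N:ℝ)/(k N)) := by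
      have hkpos : (0:ℝ) < k N := by exact_mod_cast hk1
      have hfrac : (N:ℝ)^(1-θ)/2 ≤ (N:ℝ)/(k N) := by
        rw [div_le_div_iff₀ (by norm_num) hkpos]
        calc (N:ℝ)^(1-θ) * (k N) ≤ (N:ℝ)^(1-θ) * (2*(N:ℝ)^θ) :=
              mul_le_mul_of_nonneg_left hkub (le_of_lt h1θpos)
          _ = ((N:ℝ)^θ * (N:ℝ)^(1-θ)) * 2 := by ring
          _ = (N:ℝ)*2 := by rw [← hsplitN]
      have hlogle : Real.log ((N:ℝ)^(1-θ)/2) ≤ Real.log ((N:ℝ)/(k N)) :=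
        Real.log_le_log (by positivity) hfrac
      have heq : Real.log ((N:ℝ)^(1-θ)/2) = (1-θ)*Real.log (N:ℝ) - Real.log 2 := by
        rw [Real.log_div (ne_of_gt h1θpos) two_ne_zero, hlogN1θ]
      have hL' := le_trans (le_max_left _ _) h1'
      linarith
    exact ⟨hk1, h2k, hxL⟩
  -- from the convergence hypothesis
  have hgt : ∀ᶠ (N : ℕ) in Filter.atTop,
      (1:ℝ≥0∞)/2 < genMeasure N (m N) (k N) (ν N) p q
        {ω | est N ω.2.1 (displayedGen ω.1 ω.2.1 ω.2.2.1 ω.2.2.2) = ω.1} := by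
    refine hten.eventually (eventually_gt_nhds ?_)
    norm_num
  obtain ⟨N, hcond, hgtN⟩ := (hev.and hgt).exists
  obtain ⟨hk1, h2k, hxL⟩ := hcond
  -- setup at N
  set x : ℝ := Real.log ((N:ℝ)/(k N)) with hxdef
  have hL1 : (1:ℝ) ≤ L := le_max_right _ _
  have hx1 : (1:ℝ) ≤ x := le_trans hL1 hxL
  set K : ℝ := (k N : ℝ) * x with hKdef
  have hkr : (1:ℝ) ≤ (k N : ℝ) := by exact_mod_cast hk1
  have hxK : x ≤ K := by nlinarith
  have hK1 : (1:ℝ) ≤ K := le_trans hx1 hxK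
  have hc : (0:ℝ) < (ε'/2) * K := by positivity
  -- the capacity expression in hm is capC
  have hCapinv : klBer q (1 / (1 + Real.exp ((binEnt p - binEnt q) / (1 - p - q))))
      = capC p q := rfl
  have hmn := hm N
  rw [hCapinv] at hmn
  have hm1 : (m N : ℝ) ≤ (1 - ε') * (K / capC p q) := by
    have h0 : (0:ℝ) ≤ 1 / capC p q * ((k N : ℝ) * x) := by positivity
    calc (m N:ℝ) ≤ (1-ε) * (1/capC p q * ((k N : ℝ) * x)) := hmn
      _ ≤ (1-ε') * (1/capC p q * ((k N : ℝ) * x)) :=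
          mul_le_mul_of_nonneg_right (by linarith) h0
      _ = (1-ε') * (K / capC p q) := by rw [hKdef]; ring
  have hmCap : (m N : ℝ) * capC p q ≤ (1 - ε') * K := by
    have h2 := mul_le_mul_of_nonneg_right hm1 hCap.le
    calc (m N:ℝ) * capC p q ≤ ((1-ε') * (K/capC p q)) * capC p q := h2
      _ = (1-ε')*K := by field_simp
  have hmle : (m N : ℝ) ≤ K / capC p q := by
    refine le_trans hm1 ?_
    have hKc : (0:ℝ) ≤ K / capC p q := by positivity
    nlinarith
  have hmle' : (m N : ℝ) * capC p q ≤ K := by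
    rw [← le_div_iff₀ hCap]
    exact hmle
  -- nonemptiness
  have hkN : k N ≤ N := by omega
  have hNne : (sigmaSet N (k N)).Nonempty := by
    rw [← Finset.card_pos, sigmaSet_card]
    exact Nat.choose_pos hkN
  have hmain := main_bound p q hp hq hpq N (m N) (k N) (ν N) (hν N) (est N)
    ((ε'/2)*K) hc hNne
  -- T1 numeric bound
  have hT1v : ENNReal.ofReal ((m N : ℝ) * (BC p q)^2 / ((ε'/2)*K)^2)
      ≤ ENNReal.ofReal (1/4) := by
    apply ENNReal.ofReal_le_ofReal
    have hKL1 : 16 * (BC p q)^2 / (capC p q * ε'^2) ≤ K :=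
      le_trans (le_trans (le_max_left _ _) (le_max_left _ _)) (le_trans hxL hxK)
    have hKL1' : 16 * (BC p q)^2 ≤ K * (capC p q * ε'^2) := by
      rw [div_le_iff₀ (by positivity)] at hKL1
      linarith
    rw [div_le_iff₀ (by positivity)]
    have hf1 : (m N:ℝ) * capC p q * (BC p q)^2 ≤ K * (BC p q)^2 :=
      mul_le_mul_of_nonneg_right hmle' (by positivity)
    have hf2 : (16 * (BC p q)^2) * K ≤ (K * (capC p q * ε'^2)) * K :=
      mul_le_mul_of_nonneg_right hKL1' (by linarith)
    have hgoal : capC p q * ((m N:ℝ) * (BC p q)^2) ≤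
        capC p q * (1/4 * (ε'/2*K)^2) := by nlinarith [hf1, hf2]
    exact le_of_mul_le_mul_left (by linarith [hgoal]) hCap
  -- T2 numeric bound
  have hT2v : ((sigmaSet N (k N)).card : ℝ≥0∞)⁻¹ *
      ENNReal.ofReal (Real.exp ((m N:ℝ) * capC p q + (ε'/2)*K))
      ≤ ENNReal.ofReal (1/4) := by
    have hN2 : 2 ≤ N := by omega
    have hNr : (0:ℝ) < N := by exact_mod_cast (by omega : 0 < N)
    have hkpos : (0:ℝ) < k N := by exact_mod_cast hk1
    have hNpos : (0:ℝ) < ((N:ℝ)/(2*(k N)))^(k N) := by positivity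
    have hNlb : ((N:ℝ)/(2*(k N)))^(k N) ≤ ((sigmaSet N (k N)).card : ℝ) := by
      rw [sigmaSet_card]
      exact choose_lower hk1 h2k
    have hstep1 : ((sigmaSet N (k N)).card : ℝ≥0∞)⁻¹ ≤
        ENNReal.ofReal ((((N:ℝ)/(2*(k N)))^(k N))⁻¹) := by
      rw [ENNReal.ofReal_inv_of_pos hNpos]
      apply ENNReal.inv_le_inv'
      rw [← ENNReal.ofReal_natCast]
      exact ENNReal.ofReal_le_ofReal hNlb
    have hexpineq : (((N:ℝ)/(2*(k N)))^(k N))⁻¹ *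
        Real.exp ((m N:ℝ) * capC p q + (ε'/2)*K) ≤ 1/4 := by
      have hlogx : Real.log (((N:ℝ)/(2*(k N)))^(k N)) = (k N:ℝ) * (x - Real.log 2) := by
        rw [Real.log_pow]
        congr 1
        rw [show (N:ℝ)/(2*(k N)) = ((N:ℝ)/(k N))/2 by ring,
          Real.log_div (by positivity) two_ne_zero]
      rw [← Real.exp_log hNpos, ← Real.exp_neg, ← Real.exp_add]
      rw [show (1/4:ℝ) = Real.exp (Real.log (1/4)) from (Real.exp_log (by norm_num)).symm]
      apply Real.exp_le_exp.mpr
      rw [hlogx]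
      have hlog4 : Real.log (1/4:ℝ) = -Real.log 4 := by
        rw [one_div, Real.log_inv]
      rw [hlog4]
      have hL2 : (2/ε') * (2*Real.log 2 + Real.log 4) ≤ x :=
        le_trans (le_trans (le_max_right _ _) (le_max_left _ _)) hxL
      have hlog4pos : (0:ℝ) < Real.log 4 := Real.log_pos (by norm_num)
      have hkey : Real.log 2 - (ε'/2)*x ≤ -(Real.log 4) - Real.log 2 := by
        have hmul : (ε'/2) * x ≥ 2*Real.log 2 + Real.log 4 := by
          have h5 : (ε'/2) * ((2/ε') * (2*Real.log 2 + Real.log 4)) =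
              2*Real.log 2 + Real.log 4 := by
            field_simp
          nlinarith [hL2, hε'0]
        linarith
      have hklog : (k N:ℝ) * (Real.log 2 - (ε'/2)*x) ≤ Real.log 2 - (ε'/2)*x := by
        nlinarith [hkr, hkey, hlog2, hlog4pos]
      nlinarith [hmCap, hklog, hkey, hkr, hlog2]
    calc ((sigmaSet N (k N)).card : ℝ≥0∞)⁻¹ *
        ENNReal.ofReal (Real.exp ((m N:ℝ) * capC p q + (ε'/2)*K))
        ≤ ENNReal.ofReal ((((N:ℝ)/(2*(k N)))^(k N))⁻¹) *
            ENNReal.ofReal (Real.exp ((m N:ℝ) * capC p q + (ε'/2)*K)) :=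
          mul_le_mul_left hstep1 _
      _ = ENNReal.ofReal ((((N:ℝ)/(2*(k N)))^(k N))⁻¹ *
            Real.exp ((m N:ℝ) * capC p q + (ε'/2)*K)) :=
          (ENNReal.ofReal_mul (by positivity)).symm
      _ ≤ ENNReal.ofReal (1/4) := ENNReal.ofReal_le_ofReal hexpineq
  -- combine
  have hfinal := le_trans hmain (add_le_add hT1v hT2v)
  have h12 : ENNReal.ofReal (1/4) + ENNReal.ofReal (1/4) = ENNReal.ofReal (1/2) := by
    rw [← ENNReal.ofReal_add (by norm_num) (by norm_num)]
    norm_num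
  rw [h12] at hfinal
  have hcontr := lt_of_lt_of_le hgtN hfinal
  have hhalf : ENNReal.ofReal (1/2) = (1:ℝ≥0∞)/2 := by
    rw [ENNReal.ofReal_div_of_pos (by norm_num)]
    norm_num
  rw [hhalf] at hcontr
  exact lt_irrefl _ hcontr

end
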